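/- arXiv:1511.00531 — 2 statements merged into one kernel-verified Lean document; each statement's English description precedes it below -/
import Mathlib

section
/- (Theorem 1, achievability, high-loss regime.) For every γ ∈ (0, 1/√2], the triple Π₀ = 2γ²|Ψ⁺⟩⟨Ψ⁺|, Π₁ = 2γ²|Ψ⁻⟩⟨Ψ⁻|, Π_∅ = I₄ − Π₀ − Π₁ is γ-admissible and attains V = (1/2)·Tr[ρ₀Π₀ + ρ₁Π₁] = γ²·(1 + 1/√2)/2. -/
open Matrix Complex Kronecker BigOperators ComplexOrder

noncomputable section

abbrev Mat2 := Matrix (Fin 2) (Fin 2) ℂ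
abbrev Mat4 := Matrix (Fin 2 × Fin 2) (Fin 2 × Fin 2) ℂ

/-- Pauli X matrix -/
def PX : Mat2 := !![0, 1; 1, 0]

/-- Pauli Y matrix -/
def PY : Mat2 := !![0, -Complex.I; Complex.I, 0]

/-- sign (−1)^b for a bit b -/
def bsign (b : Bool) : ℂ := if b then -1 else 1

/-- boolean function f(x̄,ȳ) = (x₁·y₁) XOR x₂ XOR y₂ -/
def fxy (x y : Bool × Bool) : Bool := (((x.1 && y.1)).xor x.2).xor y.2

/-- qubit input states ω_{x̄}: ω_{(0,x₂)} = (I+(−1)^{x₂}X)/2, ω_{(1,x₂)} = (I+(−1)^{x₂}Y)/2 -/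
def omg (x : Bool × Bool) : Mat2 :=
  (1/2 : ℂ) • ((1 : Mat2) + bsign x.2 • (if x.1 then PY else PX))

/-- qubit input states τ_{ȳ} = (I+(−1)^{y₂}(X+(−1)^{y₁}Y)/√2)/2 -/
def tau (y : Bool × Bool) : Mat2 :=
  (1/2 : ℂ) • ((1 : Mat2) + (bsign y.2 / (Real.sqrt 2 : ℂ)) • (PX + bsign y.1 • PY))

/-- averaged input states ρ₀ (for c = false) and ρ₁ (for c = true) -/
def rho (c : Bool) : Mat4 :=
  (1/8 : ℂ) • ∑ x : Bool × Bool, ∑ y : Bool × Bool,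
    (if fxy x y = c then omg x ⊗ₖ tau y else 0)

/-- standard basis vectors of ℂ⁴ ≅ ℂ² ⊗ ℂ² -/
def ket (i j : Fin 2) : (Fin 2 × Fin 2) → ℂ := fun p => if p = (i, j) then 1 else 0

def PhiP : (Fin 2 × Fin 2) → ℂ := fun p => (1 / (Real.sqrt 2 : ℂ)) * (ket 0 0 p + ket 1 1 p)
def PhiM : (Fin 2 × Fin 2) → ℂ := fun p => (1 / (Real.sqrt 2 : ℂ)) * (ket 0 0 p - ket 1 1 p)
def PsiP : (Fin 2 × Fin 2) → ℂ := fun p => (1 / (Real.sqrt 2 : ℂ)) * (ket 0 1 p + ket 1 0 p)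
def PsiM : (Fin 2 × Fin 2) → ℂ := fun p => (1 / (Real.sqrt 2 : ℂ)) * (ket 0 1 p - ket 1 0 p)

/-- rank one projector |v⟩⟨v| -/
def proj (v : (Fin 2 × Fin 2) → ℂ) : Mat4 := Matrix.vecMulVec v (star v)

/-- a γ-admissible measurement triple -/
def Admissible (γ : ℝ) (P0 P1 Pe : Mat4) : Prop :=
  P0.PosSemidef ∧ P1.PosSemidef ∧ Pe.PosSemidef ∧
  P0 + P1 + Pe = 1 ∧
  ∀ x y : Bool × Bool, ((omg x ⊗ₖ tau y) * Pe).trace = 1 - (γ : ℂ)^2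

/-- guessing value V = (1/2)·Tr[ρ₀Π₀ + ρ₁Π₁] (a real number) -/
def Gval (P0 P1 : Mat4) : ℝ := (1/2) * ((rho false * P0 + rho true * P1).trace).re


-- ===== auxiliary lemmas =====

lemma hs2 : ((Real.sqrt 2:ℝ):ℂ) * ((Real.sqrt 2:ℝ):ℂ) = 2 := by
  norm_cast; exact Real.mul_self_sqrt (by norm_num)

lemma hs0 : ((Real.sqrt 2:ℝ):ℂ) ≠ 0 := by
  intro h; have := hs2; rw [h] at this; norm_num at this

lemma hsi : ((Real.sqrt 2:ℝ):ℂ)⁻¹ = ((Real.sqrt 2:ℝ):ℂ)/2 := by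
  have h2 := hs2; have h0 := hs0
  field_simp
  linear_combination -h2

lemma proj_psd (v : (Fin 2 × Fin 2) → ℂ) : (proj v).PosSemidef := by
  have h : proj v = (Matrix.replicateRow Unit (star v))ᴴ * Matrix.replicateRow Unit (star v) := by
    rw [Matrix.conjTranspose_replicateRow, star_star, ← Matrix.vecMulVec_eq]; rfl
  rw [h]
  exact Matrix.posSemidef_conjTranspose_mul_self _

lemma smul_psd {M : Mat4} (h : M.PosSemidef) {c : ℝ} (hc : 0 ≤ c) : ((c:ℝ) • M).PosSemidef := by
  have e : (c:ℝ) • M = ((c:ℂ)) • M := by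
    ext i j; simp [Matrix.smul_apply, Complex.real_smul]
  rw [e]
  refine Matrix.PosSemidef.of_dotProduct_mulVec_nonneg ?_ ?_
  · unfold Matrix.IsHermitian
    rw [Matrix.conjTranspose_smul, h.1.eq]
    congr 1
    simp
  · intro x
    rw [Matrix.smul_mulVec, dotProduct_smul]
    exact mul_nonneg (by exact_mod_cast hc) (h.dotProduct_mulVec_nonneg x)

lemma Pe_eq (c : ℝ) : (1 : Mat4) - (c:ℝ) • proj PsiP - (c:ℝ) • proj PsiM
    = Matrix.diagonal (fun p => if p.1 = p.2 then 1 else 1 - (c:ℂ)) := by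
  have h2 := hs2; have h0 := hs0
  ext ⟨i,j⟩ ⟨k,l⟩
  fin_cases i <;> fin_cases j <;> fin_cases k <;> fin_cases l <;>
    simp [proj, Matrix.vecMulVec, PsiP, PsiM, ket, Matrix.one_apply, Matrix.diagonal,
      Prod.ext_iff, Complex.real_smul] <;>
    field_simp [pow_two, h2] <;> rw [sq, h2] <;> ring

lemma omg_diag (x : Bool × Bool) (i : Fin 2) : omg x i i = 1/2 := by
  obtain ⟨x1, x2⟩ := x
  cases x1 <;> cases x2 <;> fin_cases i <;>
    simp [omg, PX, PY, bsign, Matrix.one_apply] <;> norm_num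

lemma tau_diag (y : Bool × Bool) (i : Fin 2) : tau y i i = 1/2 := by
  obtain ⟨y1, y2⟩ := y
  cases y1 <;> cases y2 <;> fin_cases i <;>
    simp [tau, PX, PY, bsign, Matrix.one_apply] <;> norm_num

lemma trace_mul_diag (M : Mat4) (d : (Fin 2 × Fin 2) → ℂ) :
    (M * Matrix.diagonal d).trace = ∑ p, M p p * d p := by
  simp [Matrix.trace, Matrix.diag, Matrix.mul_diagonal]

lemma real_smul_mat (r : ℝ) (M : Mat4) : (r : ℝ) • M = ((r:ℂ)) • M := by
  ext i j; simp [Matrix.smul_apply, Complex.real_smul]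

set_option maxHeartbeats 1000000 in
lemma rho_0101 (c : Bool) : rho c (0,1) (0,1) = 1/4 := by
  have h2 := hs2; have h0 := hs0
  cases c <;>
  · simp [rho, Matrix.smul_apply, Matrix.sum_apply, Fintype.sum_prod_type, Fintype.sum_bool,
      fxy, omg, tau, bsign, PX, PY, Matrix.one_apply, Matrix.add_apply]
    try rw [div_eq_mul_inv, hsi]
    ring_nf
    try simp only [Complex.I_sq, pow_succ, pow_zero, one_mul, h2]
    try norm_num
    try (ring_nf; simp only [Complex.I_sq, pow_succ, pow_zero, one_mul, h2]; norm_num)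
    try ring

set_option maxHeartbeats 1000000 in
lemma rho_1010 (c : Bool) : rho c (1,0) (1,0) = 1/4 := by
  have h2 := hs2; have h0 := hs0
  cases c <;>
  · simp [rho, Matrix.smul_apply, Matrix.sum_apply, Fintype.sum_prod_type, Fintype.sum_bool,
      fxy, omg, tau, bsign, PX, PY, Matrix.one_apply, Matrix.add_apply]
    try rw [div_eq_mul_inv, hsi]
    ring_nf
    try simp only [Complex.I_sq, pow_succ, pow_zero, one_mul, h2]
    try norm_num
    try (ring_nf; simp only [Complex.I_sq, pow_succ, pow_zero, one_mul, h2]; norm_num)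
    try ring

set_option maxHeartbeats 1000000 in
lemma rho_0110 (c : Bool) : rho c (0,1) (1,0) = bsign c * (Real.sqrt 2 : ℂ)/8 := by
  have h2 := hs2; have h0 := hs0
  cases c <;>
  · simp [rho, Matrix.smul_apply, Matrix.sum_apply, Fintype.sum_prod_type, Fintype.sum_bool,
      fxy, omg, tau, bsign, PX, PY, Matrix.one_apply, Matrix.add_apply]
    try rw [div_eq_mul_inv, hsi]
    ring_nf
    try simp only [Complex.I_sq, pow_succ, pow_zero, one_mul, h2]
    try norm_num
    try (ring_nf; simp only [Complex.I_sq, pow_succ, pow_zero, one_mul, h2]; norm_num)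
    try ring

set_option maxHeartbeats 1000000 in
lemma rho_1001 (c : Bool) : rho c (1,0) (0,1) = bsign c * (Real.sqrt 2 : ℂ)/8 := by
  have h2 := hs2; have h0 := hs0
  cases c <;>
  · simp [rho, Matrix.smul_apply, Matrix.sum_apply, Fintype.sum_prod_type, Fintype.sum_bool,
      fxy, omg, tau, bsign, PX, PY, Matrix.one_apply, Matrix.add_apply]
    try rw [div_eq_mul_inv, hsi]
    ring_nf
    try simp only [Complex.I_sq, pow_succ, pow_zero, one_mul, h2]
    try norm_num
    try (ring_nf; simp only [Complex.I_sq, pow_succ, pow_zero, one_mul, h2]; norm_num)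
    try ring

set_option maxHeartbeats 1000000 in
lemma trace_mul_projP (M : Mat4) : (M * proj PsiP).trace
    = (1/2) * (M (0,1) (0,1) + M (0,1) (1,0) + M (1,0) (0,1) + M (1,0) (1,0)) := by
  have h2 := hs2; have h0 := hs0
  simp [Matrix.trace, Matrix.diag, Matrix.mul_apply, proj, Matrix.vecMulVec, PsiP, ket,
    Fintype.sum_prod_type, Fin.sum_univ_two, Prod.ext_iff, Complex.star_def, map_div₀]
  try rw [div_eq_mul_inv, hsi]
  field_simp [pow_two, h2]
  rw [sq, h2]
  ring

set_option maxHeartbeats 1000000 in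
lemma trace_mul_projM (M : Mat4) : (M * proj PsiM).trace
    = (1/2) * (M (0,1) (0,1) - M (0,1) (1,0) - M (1,0) (0,1) + M (1,0) (1,0)) := by
  have h2 := hs2; have h0 := hs0
  simp [Matrix.trace, Matrix.diag, Matrix.mul_apply, proj, Matrix.vecMulVec, PsiM, ket,
    Fintype.sum_prod_type, Fin.sum_univ_two, Prod.ext_iff, Complex.star_def, map_div₀]
  try rw [div_eq_mul_inv, hsi]
  field_simp [pow_two, h2]
  rw [sq, h2]
  ring


/-- achievability, high-loss regime: for γ ∈ (0, 1/√2], the triple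
Π₀ = 2γ²|Ψ⁺⟩⟨Ψ⁺|, Π₁ = 2γ²|Ψ⁻⟩⟨Ψ⁻|, Π_∅ = I − Π₀ − Π₁ is γ-admissible and attains
V = γ²·(1 + 1/√2)/2. -/
theorem guessing_achievable_high_loss (γ : ℝ) (hγ : 0 < γ) (hγ' : γ ≤ 1/Real.sqrt 2) :
    Admissible γ ((2*γ^2 : ℝ) • proj PsiP) ((2*γ^2 : ℝ) • proj PsiM)
      (1 - (2*γ^2 : ℝ) • proj PsiP - (2*γ^2 : ℝ) • proj PsiM) ∧
    Gval ((2*γ^2 : ℝ) • proj PsiP) ((2*γ^2 : ℝ) • proj PsiM)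
      = γ^2 * (1 + 1/Real.sqrt 2)/2 := by
  have h2 := hs2; have h0 := hs0
  have hsq : Real.sqrt 2 * Real.sqrt 2 = 2 := Real.mul_self_sqrt (by norm_num)
  have hsr0 : (0:ℝ) < Real.sqrt 2 := Real.sqrt_pos.2 (by norm_num)
  have hsq : Real.sqrt 2 * Real.sqrt 2 = 2 := Real.mul_self_sqrt (by norm_num)
  have h12 : (1/Real.sqrt 2)*(1/Real.sqrt 2) = 1/2 := by
    rw [div_mul_div_comm, hsq]; norm_num
  have hγ2 : 2 * γ^2 ≤ 1 := by
    have h3 := mul_self_le_mul_self hγ.le hγ'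
    rw [h12] at h3
    nlinarith [h3]
  constructor
  · refine ⟨smul_psd (proj_psd _) (by positivity), smul_psd (proj_psd _) (by positivity), ?_, by abel, ?_⟩
    · rw [Pe_eq (2*γ^2)]
      refine Matrix.posSemidef_diagonal_iff.mpr fun p => ?_
      by_cases h : p.1 = p.2 <;> simp [h] <;>
      · have h4 := Complex.real_le_real.2 hγ2
        push_cast at h4 ⊢
        try exact h4
        try linarith [h4]
    · intro x y
      rw [Pe_eq (2*γ^2), trace_mul_diag, Fintype.sum_prod_type]
      simp [Matrix.kroneckerMap_apply, omg_diag, tau_diag, Fin.sum_univ_two]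
      push_cast
      ring
  · unfold Gval
    rw [Matrix.trace_add, real_smul_mat, real_smul_mat, mul_smul_comm, mul_smul_comm,
      Matrix.trace_smul, Matrix.trace_smul, trace_mul_projP, trace_mul_projM,
      rho_0101, rho_1010, rho_0110, rho_1001, rho_0101, rho_1010, rho_0110, rho_1001]
    have key : ((2*γ^2:ℝ):ℂ) • ((1/2) * ((1/4 : ℂ) + bsign false * (Real.sqrt 2 : ℂ)/8 + bsign false * (Real.sqrt 2 : ℂ)/8 + 1/4))
        + ((2*γ^2:ℝ):ℂ) • ((1/2) * ((1/4 : ℂ) - bsign true * (Real.sqrt 2 : ℂ)/8 - bsign true * (Real.sqrt 2 : ℂ)/8 + 1/4))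
        = ((γ^2 * (2 + Real.sqrt 2)/2 : ℝ) : ℂ) := by
      simp [bsign, smul_eq_mul]
      push_cast
      ring
    rw [key, Complex.ofReal_re]
    field_simp
    ring_nf
    nlinarith [hsq, Real.sqrt_nonneg 2, sq_nonneg γ]
end
end

section
/- (Theorem 2, upper bound.) For every γ ∈ (0,1] and every γ-admissible triple (Π₀,Π₁,Π_∅) in which Π₀, Π₁ and Π_∅ are all PPT, the guessing value satisfies V = (1/2)·Tr[ρ₀Π₀ + ρ₁Π₁] ≤ γ²·(2 + 1/√2)/4; equivalently, the normalized guessing probability V/γ² is at most 1/2 + 1/(4√2). -/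
open Matrix Complex Kronecker BigOperators ComplexOrder

noncomputable section

/-- partial transpose over the second tensor factor -/
def ptransB (M : Mat4) : Mat4 := Matrix.of fun p q => M (p.1, q.2) (q.1, p.2)

/-- positivity under partial transpose -/
def IsPPT (M : Mat4) : Prop := M.PosSemidef ∧ (ptransB M).PosSemidef


lemma psd_trace_nonneg {M : Mat4} (hM : M.PosSemidef) : 0 ≤ M.trace :=
  hM.trace_nonneg

open scoped MatrixOrder in
lemma trace_mul_nonneg {A B : Mat4} (hA : A.PosSemidef) (hB : B.PosSemidef) :
    0 ≤ (A * B).trace := by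
  obtain ⟨C, rfl⟩ := CStarAlgebra.nonneg_iff_eq_star_mul_self.mp hB.nonneg
  rw [← mul_assoc, Matrix.trace_mul_cycle]
  exact psd_trace_nonneg (hA.mul_mul_conjTranspose_same C)

lemma trace_ptransB (M : Mat4) : (ptransB M).trace = M.trace := by
  simp [ptransB, Matrix.trace, Matrix.diag]

lemma trace_ptransB_mul (M N : Mat4) :
    (ptransB M * ptransB N).trace = (M * N).trace := by
  simp only [Matrix.trace, Matrix.diag, Matrix.mul_apply, ptransB, Matrix.of_apply,
    Fintype.sum_prod_type, Fin.sum_univ_two]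
  ring
lemma omg_sum : ∑ x : Bool × Bool, omg x = (2:ℂ) • (1:Mat2) := by
  rw [Fintype.sum_prod_type]
  ext i j
  fin_cases i <;> fin_cases j <;>
    simp [omg, bsign, PX, PY, Matrix.one_apply] <;> ring

lemma tau_sum : ∑ y : Bool × Bool, tau y = (2:ℂ) • (1:Mat2) := by
  rw [Fintype.sum_prod_type]
  ext i j
  fin_cases i <;> fin_cases j <;>
    simp [tau, bsign, PX, PY, Matrix.one_apply] <;> ring

lemma omg_wsum (b : Bool) : ∑ x₂ : Bool, bsign x₂ • omg (b, x₂) = if b then PY else PX := by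
  ext i j
  cases b <;> fin_cases i <;> fin_cases j <;>
    simp [omg, bsign, PX, PY, Matrix.one_apply] <;> ring

lemma tau_wsum (b : Bool) :
    ∑ y₂ : Bool, bsign y₂ • tau (b, y₂) = (1/(Real.sqrt 2:ℂ)) • (PX + bsign b • PY) := by
  ext i j
  cases b <;> fin_cases i <;> fin_cases j <;>
    simp [tau, bsign, PX, PY, Matrix.one_apply] <;> ring
lemma kron_sum {ι κ : Type*} [Fintype ι] [Fintype κ] (f : ι → Mat2) (g : κ → Mat2) :
    (∑ i, f i) ⊗ₖ (∑ j, g j) = ∑ i, ∑ j, f i ⊗ₖ g j := by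
  ext ⟨p,q⟩ ⟨r,s⟩
  simp [Matrix.sum_apply, Finset.sum_mul_sum]

lemma sum_states : ∑ x : Bool × Bool, ∑ y : Bool × Bool, (omg x ⊗ₖ tau y) = (4:ℂ) • (1:Mat4) := by
  rw [← kron_sum, omg_sum, tau_sum, smul_kronecker, kronecker_smul, one_kronecker_one,
    smul_smul]
  norm_num

lemma bsign_fxy (a b c d : Bool) :
    bsign (fxy (a,b) (c,d)) = bsign (a && c) * (bsign b * bsign d) := by
  cases a <;> cases b <;> cases c <;> cases d <;> simp [bsign, fxy] <;> norm_num

lemma Tfactor : (∑ x : Bool × Bool, ∑ y : Bool × Bool, bsign (fxy x y) • (omg x ⊗ₖ tau y))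
    = ∑ a : Bool, ∑ c : Bool, bsign (a && c) •
        ((∑ b : Bool, bsign b • omg (a,b)) ⊗ₖ (∑ d : Bool, bsign d • tau (c,d))) := by
  simp_rw [kron_sum, Finset.smul_sum, smul_kronecker, kronecker_smul, smul_smul,
    Fintype.sum_prod_type]
  refine Finset.sum_congr rfl fun a _ => ?_
  rw [Finset.sum_comm]
  refine Finset.sum_congr rfl fun c _ => Finset.sum_congr rfl fun b _ =>
    Finset.sum_congr rfl fun d _ => ?_
  rw [bsign_fxy]
lemma rho_add : rho false + rho true = (1/2:ℂ) • (1:Mat4) := by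
  have key : ∀ (b : Bool) (M : Mat4),
      ((if b = false then M else 0) + (if b = true then M else 0)) = M := by
    intro b M; cases b <;> simp
  unfold rho
  rw [← smul_add, ← Finset.sum_add_distrib]
  simp_rw [← Finset.sum_add_distrib, key, sum_states, smul_smul]
  norm_num

lemma rho_sub : rho false - rho true
    = (1/(4*(Real.sqrt 2:ℂ))) • (PX ⊗ₖ PX + PY ⊗ₖ PY) := by
  have key : ∀ (b : Bool) (M : Mat4),
      ((if b = false then M else 0) - (if b = true then M else 0)) = bsign b • M := by
    intro b M; cases b <;> simp [bsign]
  unfold rho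
  rw [← smul_sub, ← Finset.sum_sub_distrib]
  simp_rw [← Finset.sum_sub_distrib, key, Tfactor, omg_wsum, tau_wsum]
  ext ⟨i,j⟩ ⟨k,l⟩
  fin_cases i <;> fin_cases j <;> fin_cases k <;> fin_cases l <;>
    simp [Matrix.sum_apply, Fintype.sum_bool, bsign, PX, PY] <;> ring_nf <;>
    simp [Complex.I_sq] <;> ring_nf
lemma sqrt2_sq : ((Real.sqrt 2 : ℝ) : ℂ) * ((Real.sqrt 2 : ℝ) : ℂ) = 2 := by
  rw [← Complex.ofReal_mul, Real.mul_self_sqrt (by norm_num)]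
  norm_num

lemma sqrt2_pow : ((Real.sqrt 2 : ℝ) : ℂ) ^ 2 = 2 := by
  rw [sq, sqrt2_sq]

lemma proj_diff : proj PsiP - proj PsiM = (1/2:ℂ) • (PX ⊗ₖ PX + PY ⊗ₖ PY) := by
  ext ⟨i,j⟩ ⟨k,l⟩
  fin_cases i <;> fin_cases j <;> fin_cases k <;> fin_cases l <;>
    simp [proj, vecMulVec, PsiP, PsiM, ket, PX, PY, Complex.star_def, _root_.map_mul,
      map_add, map_sub, map_div₀, Complex.conj_ofReal, Prod.ext_iff] <;>
    field_simp <;>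
    (try ring_nf) <;> (try norm_num [Complex.I_sq, sqrt2_pow]) <;> (try ring_nf)
lemma ptB_PsiP : ptransB (proj PsiP) = (1/2:ℂ) • (1:Mat4) - proj PhiM := by
  ext ⟨i,j⟩ ⟨k,l⟩
  fin_cases i <;> fin_cases j <;> fin_cases k <;> fin_cases l <;>
    simp [ptransB, proj, vecMulVec, PsiP, PhiM, ket, Matrix.one_apply, Complex.star_def,
      _root_.map_mul, map_add, map_sub, map_div₀, Complex.conj_ofReal, Prod.ext_iff] <;>
    field_simp <;>
    (try ring_nf) <;> (try norm_num [Complex.I_sq, sqrt2_pow]) <;> (try ring_nf)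

lemma ptB_PsiM : ptransB (proj PsiM) = (1/2:ℂ) • (1:Mat4) - proj PhiP := by
  ext ⟨i,j⟩ ⟨k,l⟩
  fin_cases i <;> fin_cases j <;> fin_cases k <;> fin_cases l <;>
    simp [ptransB, proj, vecMulVec, PsiM, PhiP, ket, Matrix.one_apply, Complex.star_def,
      _root_.map_mul, map_add, map_sub, map_div₀, Complex.conj_ofReal, Prod.ext_iff] <;>
    field_simp <;>
    (try ring_nf) <;> (try norm_num [Complex.I_sq, sqrt2_pow]) <;> (try ring_nf)

/-- Theorem 2, upper bound: for every γ ∈ (0,1] and every γ-admissible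
PPT triple, V ≤ γ²·(2 + 1/√2)/4, equivalently V/γ² ≤ 1/2 + 1/(4√2). -/
theorem ppt_upper_bound (γ : ℝ) (hγ : 0 < γ) (hγ' : γ ≤ 1)
    (P0 P1 Pe : Mat4) (h : Admissible γ P0 P1 Pe)
    (h0 : IsPPT P0) (h1 : IsPPT P1) (he : IsPPT Pe) :
    Gval P0 P1 ≤ γ^2 * (2 + 1/Real.sqrt 2)/4 ∧
    Gval P0 P1 / γ^2 ≤ 1/2 + 1/(4*Real.sqrt 2) := by
  obtain ⟨hP0, hP1, hPe, hsum, hcon⟩ := h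
  set s := Real.sqrt 2 with hs_def
  have hs : 0 < s := Real.sqrt_pos.mpr (by norm_num)
  -- trace of Pe
  have hPe_tr : Pe.trace = 4 * (1 - (γ:ℂ)^2) := by
    have e1 : ((∑ x : Bool × Bool, ∑ y : Bool × Bool, omg x ⊗ₖ tau y) * Pe).trace
        = ∑ x : Bool × Bool, ∑ y : Bool × Bool, ((omg x ⊗ₖ tau y) * Pe).trace := by
      rw [Matrix.sum_mul, Matrix.trace_sum]
      exact Finset.sum_congr rfl fun x _ => by rw [Matrix.sum_mul, Matrix.trace_sum]
    rw [sum_states] at e1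
    simp only [hcon] at e1
    simp only [Matrix.smul_mul, one_mul, Matrix.trace_smul, smul_eq_mul,
      Finset.sum_const, Finset.card_univ] at e1
    have : (4:ℂ) * Pe.trace = 16 * (1 - (γ:ℂ)^2) := by
      rw [e1]; simp; ring
    linear_combination this / 4
  -- trace of P0 + P1
  have htr01 : P0.trace + P1.trace = 4 * (γ:ℂ)^2 := by
    have := congrArg Matrix.trace hsum
    rw [Matrix.trace_add, Matrix.trace_add, hPe_tr] at this
    have h4 : (1:Mat4).trace = 4 := by simp [Matrix.trace_one]
    rw [h4] at this
    linear_combination this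
  have hp01 : (P0.trace).re + (P1.trace).re = 4 * γ^2 := by
    have := congrArg Complex.re htr01
    simpa [Complex.add_re, ← Complex.ofReal_pow] using this
  -- trace identities for the Bell projectors
  have hA0 : (proj PsiP * P0).trace = (1/2:ℂ) * P0.trace - (proj PhiM * ptransB P0).trace := by
    rw [← trace_ptransB_mul, ptB_PsiP, Matrix.sub_mul, Matrix.trace_sub, Matrix.smul_mul,
      one_mul, Matrix.trace_smul, trace_ptransB, smul_eq_mul]
  have hB1 : (proj PsiM * P1).trace = (1/2:ℂ) * P1.trace - (proj PhiP * ptransB P1).trace := by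
    rw [← trace_ptransB_mul, ptB_PsiM, Matrix.sub_mul, Matrix.trace_sub, Matrix.smul_mul,
      one_mul, Matrix.trace_smul, trace_ptransB, smul_eq_mul]
  -- nonnegativity facts
  have nn : ∀ {A B : Mat4}, A.PosSemidef → B.PosSemidef → 0 ≤ ((A*B).trace).re := by
    intro A B hA hB
    exact (Complex.nonneg_iff.mp (trace_mul_nonneg hA hB)).1
  have nA1 : 0 ≤ ((proj PsiP * P1).trace).re := nn (proj_psd _) hP1
  have nB0 : 0 ≤ ((proj PsiM * P0).trace).re := nn (proj_psd _) hP0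
  have nQ0 : 0 ≤ ((proj PhiM * ptransB P0).trace).re := nn (proj_psd _) h0.2
  have nQ1 : 0 ≤ ((proj PhiP * ptransB P1).trace).re := nn (proj_psd _) h1.2
  -- upper bounds
  have bA0 : ((proj PsiP * P0).trace).re ≤ (1/2) * (P0.trace).re := by
    have := congrArg Complex.re hA0
    simp only [Complex.sub_re, Complex.mul_re] at this
    rw [this]; norm_num; linarith [nQ0]
  have bB1 : ((proj PsiM * P1).trace).re ≤ (1/2) * (P1.trace).re := by
    have := congrArg Complex.re hB1
    simp only [Complex.sub_re, Complex.mul_re] at this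
    rw [this]; norm_num; linarith [nQ1]
  -- decompose the guessing value
  have hM : (2:ℂ) • (rho false * P0 + rho true * P1)
      = (rho false + rho true) * (P0 + P1) + (rho false - rho true) * (P0 - P1) := by
    rw [Matrix.add_mul, Matrix.mul_add, Matrix.mul_add, Matrix.sub_mul, Matrix.mul_sub,
      Matrix.mul_sub, two_smul]
    abel
  have hT2 : (2:ℂ) * (rho false * P0 + rho true * P1).trace
      = ((rho false + rho true) * (P0 + P1)).trace
        + ((rho false - rho true) * (P0 - P1)).trace := by
    rw [← smul_eq_mul, ← Matrix.trace_smul, hM, Matrix.trace_add]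
  have ht01 : ((rho false + rho true) * (P0 + P1)).trace = 2 * (γ:ℂ)^2 := by
    rw [rho_add, Matrix.smul_mul, one_mul, Matrix.trace_smul, Matrix.trace_add, htr01,
      smul_eq_mul]
    ring
  have hKdiff : (PX ⊗ₖ PX + PY ⊗ₖ PY) = (2:ℂ) • (proj PsiP - proj PsiM) := by
    rw [proj_diff, smul_smul]; norm_num
  have htD : ((rho false - rho true) * (P0 - P1)).trace
      = (1/(2*(s:ℂ))) * ((proj PsiP * P0).trace - (proj PsiP * P1).trace
          - (proj PsiM * P0).trace + (proj PsiM * P1).trace) := by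
    rw [rho_sub, hKdiff, smul_smul, Matrix.smul_mul, Matrix.trace_smul, smul_eq_mul]
    rw [Matrix.sub_mul, Matrix.mul_sub, Matrix.mul_sub, Matrix.trace_sub, Matrix.trace_sub,
      Matrix.trace_sub]
    rw [← hs_def]
    ring
  -- real part bookkeeping
  have hre : (2:ℝ) * (((rho false * P0 + rho true * P1).trace).re)
      = 2 * γ^2 + (1/(2*s)) * (((proj PsiP * P0).trace).re - ((proj PsiP * P1).trace).re
          - ((proj PsiM * P0).trace).re + ((proj PsiM * P1).trace).re) := by
    have := congrArg Complex.re hT2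
    rw [ht01, htD] at this
    have hc : (1/(2*(s:ℂ))) = ((1/(2*s) : ℝ) : ℂ) := by push_cast; ring
    rw [hc] at this
    simpa [Complex.add_re, Complex.sub_re, Complex.mul_re, Complex.ofReal_re,
      Complex.ofReal_im, Complex.re_ofReal_mul, ← Complex.ofReal_pow] using this
  have key : Gval P0 P1 ≤ γ^2 * (2 + 1/s)/4 := by
    have hsne : s ≠ 0 := ne_of_gt hs
    have hfrac : 0 < 1/(2*s) := by positivity
    have hbound : ((proj PsiP * P0).trace).re - ((proj PsiP * P1).trace).re
        - ((proj PsiM * P0).trace).re + ((proj PsiM * P1).trace).re ≤ 2*γ^2 := by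
      have : (1/2) * (P0.trace).re + (1/2) * (P1.trace).re = 2*γ^2 := by linarith
      linarith [bA0, bB1, nA1, nB0]
    have h2 : 2 * (((rho false * P0 + rho true * P1).trace).re)
        ≤ 2*γ^2 + (1/(2*s)) * (2*γ^2) := by
      rw [hre]
      have := mul_le_mul_of_nonneg_left hbound (le_of_lt hfrac)
      linarith
    rw [Gval]
    have : γ^2 * (2 + 1/s)/4 = (2*γ^2 + (1/(2*s)) * (2*γ^2))/4 := by
      field_simp
    rw [this]
    linarith
  refine ⟨key, ?_⟩
  rw [div_le_iff₀ (by positivity : (0:ℝ) < γ^2)]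
  have : (1/2 + 1/(4*s)) * γ^2 = γ^2 * (2 + 1/s)/4 := by
    field_simp; ring
  rw [this]
  exact key
end
end
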